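/- For r > 2, there is no algebraic (morphism of varieties) automorphism of the projective space ℙ(Mat_r(ℂ)) extending the map [G] ↦ [(G⁻¹)ᵀ] defined on PGL_r(ℂ). -/

import Mathlib

open MvPolynomial

/-- Two nonzero matrices span the same line (represent the same point of
`ℙ(Mat_r(ℂ))`). -/
def SameProjClass {r : ℕ} (M N : Matrix (Fin r) (Fin r) ℂ) : Prop :=
  ∃ c : ℂˣ, N = (c : ℂ) • M

/-- For `r > 2`, there is no algebraic automorphism of the projective space
`ℙ(Mat_r(ℂ))` extending the inverse-transpose map `[G] ↦ [(G⁻¹)ᵀ]` on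
`PGL_r(ℂ)`.  An algebraic self-map of `ℙ(Mat_r(ℂ))` is given by a matrix of
homogeneous polynomials `P` of a common degree `d` in the matrix entries, with
no common zero away from `0`; being an automorphism it induces a bijection on
projective classes. -/
theorem no_algebraic_extension_of_inverse_transpose {r : ℕ} (hr : 2 < r) :
    ¬ ∃ (d : ℕ) (P : Fin r → Fin r → MvPolynomial (Fin r × Fin r) ℂ)
        (F : Matrix (Fin r) (Fin r) ℂ → Matrix (Fin r) (Fin r) ℂ),
      -- `F` is the polynomial map with homogeneous components `P i j` of degree `d`
      (∀ i j, (P i j).IsHomogeneous d) ∧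
      (∀ M i j, F M i j = eval (fun p => M p.1 p.2) (P i j)) ∧
      -- `F` induces a well-defined self-map of `ℙ(Mat_r(ℂ))`
      (∀ M, M ≠ 0 → F M ≠ 0) ∧
      -- the induced map on `ℙ(Mat_r(ℂ))` is bijective
      (∀ M N, M ≠ 0 → N ≠ 0 → SameProjClass (F M) (F N) → SameProjClass M N) ∧
      (∀ N, N ≠ 0 → ∃ M, M ≠ 0 ∧ SameProjClass (F M) N) ∧
      -- it extends the inverse-transpose map on `PGL_r(ℂ)`
      (∀ G : Matrix (Fin r) (Fin r) ℂ, IsUnit G.det →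
        SameProjClass (F G) (G⁻¹).transpose) := by
  rintro ⟨d, P, F, -, hFP, hF0, -, -, hext⟩
  set i0 : Fin r := ⟨0, by omega⟩
  set i1 : Fin r := ⟨1, by omega⟩
  set i2 : Fin r := ⟨2, by omega⟩
  have h01 : i0 ≠ i1 := by simp [i0, i1, Fin.ext_iff]
  have h20 : i2 ≠ i0 := by simp [i0, i2, Fin.ext_iff]
  have h21 : i2 ≠ i1 := by simp [i1, i2, Fin.ext_iff]
  -- generic fact: on an invertible diagonal matrix, F is a nonzero multiple of
  -- the inverse diagonal matrix
  have key : ∀ (w : Fin r → ℂ), (∀ i, w i ≠ 0) →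
      ∃ k : ℂ, k ≠ 0 ∧ ∀ i j, F (Matrix.diagonal w) i j
        = k * (if i = j then (w i)⁻¹ else 0) := by
    intro w hw
    have hdet : IsUnit (Matrix.diagonal w).det := by
      rw [Matrix.det_diagonal]
      exact isUnit_iff_ne_zero.mpr (Finset.prod_ne_zero_iff.mpr fun i _ => hw i)
    obtain ⟨c, hc⟩ := hext _ hdet
    have hinv : (Matrix.diagonal w)⁻¹ = Matrix.diagonal (fun i => (w i)⁻¹) := by
      apply Matrix.inv_eq_right_inv
      rw [Matrix.diagonal_mul_diagonal]
      convert Matrix.diagonal_one using 2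
      funext i
      exact mul_inv_cancel₀ (hw i)
    rw [hinv, Matrix.diagonal_transpose] at hc
    refine ⟨(c : ℂ)⁻¹, inv_ne_zero c.ne_zero, fun i j => ?_⟩
    have := congrFun (congrFun hc i) j
    rw [Matrix.diagonal_apply, Matrix.smul_apply, smul_eq_mul] at this
    rw [this, inv_mul_cancel_left₀ (Units.ne_zero c)]
  -- continuity of F along curves of diagonal matrices
  have hcont : ∀ (v : ℂ → Fin r → ℂ), (∀ i, Continuous fun t => v t i) →
      ∀ i j, Continuous fun t => F (Matrix.diagonal (v t)) i j := by
    intro v hv i j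
    simp only [hFP]
    apply (MvPolynomial.continuous_eval (P i j)).comp
    apply continuous_pi
    intro p
    by_cases hp : p.1 = p.2
    · simpa [Matrix.diagonal_apply, hp] using hv p.2
    · simpa [Matrix.diagonal_apply, hp] using continuous_const
  have hdense : Dense ({0}ᶜ : Set ℂ) := dense_compl_singleton 0
  -- the two curves
  set dv : ℂ → Fin r → ℂ := fun t i => if i = i0 ∨ i = i1 then t else 1 with hdv
  set ev : ℂ → Fin r → ℂ := fun t i => if i = i0 then t^2 else if i = i1 then t else 1 with hev
  have hdvc : ∀ i, Continuous fun t => dv t i := by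
    intro i; by_cases h : i = i0 ∨ i = i1 <;> simp [hdv, h] <;> fun_prop
  have hevc : ∀ i, Continuous fun t => ev t i := by
    intro i
    by_cases h : i = i0
    · simpa [hev, h] using (continuous_pow 2)
    · by_cases h' : i = i1 <;> simp [hev, h, h', h01.symm] <;> fun_prop
  have hd0 : ∀ (t : ℂ), t ≠ 0 → ∀ i, dv t i ≠ 0 := by
    intro t ht i; by_cases h : i = i0 ∨ i = i1 <;> simp [hdv, h, ht]
  have he0 : ∀ (t : ℂ), t ≠ 0 → ∀ i, ev t i ≠ 0 := by
    intro t ht i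
    by_cases h : i = i0
    · simp [hev, h, pow_ne_zero, ht]
    · by_cases h' : i = i1 <;> simp [hev, h, h', h01.symm, ht]
  -- curves agree at t = 0, giving M₀
  have hM0eq : ev 0 = dv 0 := by
    funext i
    by_cases h : i = i0
    · simp [hdv, hev, h]
    · by_cases h' : i = i1 <;> simp [hdv, hev, h, h', h01.symm]
  set M0 : Matrix (Fin r) (Fin r) ℂ := Matrix.diagonal (dv 0) with hM0
  have hM0ne : M0 ≠ 0 := by
    intro h
    have := congrFun (congrFun h i2) i2
    simp [hM0, Matrix.diagonal_apply, hdv, h20, h21] at this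
  -- from curve dv : off-diagonal entries of F M0 vanish
  have hoff : ∀ i j, i ≠ j → F M0 i j = 0 := by
    intro i j hij
    have heq : Set.EqOn (fun t => F (Matrix.diagonal (dv t)) i j) (fun _ => (0:ℂ)) {0}ᶜ := by
      intro t ht
      obtain ⟨k, -, hk⟩ := key (dv t) (hd0 t ht)
      simp [hk i j, hij]
    have := Continuous.ext_on hdense (hcont dv hdvc i j) continuous_const heq
    exact congrFun this 0
  -- from curve dv : F M0 i0 i0 = F M0 i1 i1
  have hdiag01 : F M0 i0 i0 = F M0 i1 i1 := by
    have := Continuous.ext_on hdense (hcont dv hdvc i0 i0) (hcont dv hdvc i1 i1)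
      (fun t ht => ?_)
    · exact congrFun this 0
    · obtain ⟨k, -, hk⟩ := key (dv t) (hd0 t ht)
      rw [hk, hk]
      simp [hdv]
  -- from curve dv : F M0 i i = 0 for i ∉ {i0, i1}
  have hdiag2 : ∀ i, i ≠ i0 → i ≠ i1 → F M0 i i = 0 := by
    intro i hi0 hi1
    have := Continuous.ext_on hdense (hcont dv hdvc i i)
      ((continuous_id.mul (hcont dv hdvc i0 i0)))
      (fun t ht => ?_)
    · have h0 := congrFun this 0
      simpa using h0
    · obtain ⟨k, -, hk⟩ := key (dv t) (hd0 t ht)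
      simp only [Pi.mul_apply, id, hk]
      simp [hdv, hi0, hi1]
      have ht' : t ≠ 0 := ht
      field_simp
  -- from curve ev : F M0 i1 i1 = 0
  have hdiag1 : F M0 i1 i1 = 0 := by
    have := Continuous.ext_on hdense (hcont ev hevc i1 i1)
      ((continuous_id.mul (hcont ev hevc i0 i0)))
      (fun t ht => ?_)
    · have h0 := congrFun this 0
      rw [hM0eq] at h0
      simpa [hM0] using h0
    · obtain ⟨k, -, hk⟩ := key (ev t) (he0 t ht)
      simp only [Pi.mul_apply, id, hk]
      simp [hev, h01.symm, h01]
      have ht' : t ≠ 0 := ht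
      field_simp
  -- conclude F M0 = 0, contradiction
  apply hF0 M0 hM0ne
  funext i j
  by_cases hij : i = j
  · subst hij
    by_cases hi0 : i = i0
    · subst hi0
      simp [hdiag01, hdiag1]
    · by_cases hi1 : i = i1
      · subst hi1; simpa using hdiag1
      · simpa using hdiag2 i hi0 hi1
  · simpa using hoff i j hij
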